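/- Let V be a group with exactly 8 elements in which every element g satisfies g * g = 1, let h ∈ V with h ≠ 1, and let φ be a group automorphism of V with φ(h) = h. Suppose O ⊆ V ∖ {1, h} is a φ-orbit of cardinality 4 (i.e., O is the φ-orbit of some element and has exactly 4 elements). Then there exists x ∈ V such that V ∖ ({1, h} ∪ O) = {x, x * h}. -/

import Mathlib

theorem stmt_13 {V : Type*} [Group V] (hcard : Nat.card V = 8)
    (hsq : ∀ g : V, g * g = 1) (h : V) (hh : h ≠ 1)
    (φ : MulAut V) (hfix : φ h = h)
    (O : Set V) (hOsub : O ⊆ (Set.univ : Set V) \ {1, h})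
    (hOorb : ∃ y : V, O = Set.range fun n : ℕ => (φ ^ n) y)
    (hO4 : O.ncard = 4) :
    ∃ x : V, (Set.univ : Set V) \ ({1, h} ∪ O) = {x, x * h} := by
  classical
  have hfin : Finite V := Nat.finite_of_card_ne_zero (by omega)
  obtain ⟨y, hy⟩ := hOorb
  set F : ℕ → V := fun n => (φ ^ n) y with hF
  have key : ∀ a b : ℕ, F (a + b) = (φ ^ a) (F b) := by
    intro a b
    simp [hF, pow_add, MulAut.mul_apply]
  have hfixpow : ∀ n : ℕ, (φ ^ n) h = h := by
    intro n
    induction n with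
    | zero => simp
    | succ k ih => rw [pow_succ, MulAut.mul_apply, hfix, ih]
  -- periodicity machinery
  have per : ∀ d : ℕ, F d = y → ∀ q r : ℕ, F (d * q + r) = F r := by
    intro d hd q r
    induction q with
    | zero => simp
    | succ k ih =>
      have e : d * (k + 1) + r = (d * k + r) + d := by ring
      rw [e, key, hd]
      exact ih
  have hmodd : ∀ d : ℕ, 0 < d → F d = y → ∀ n : ℕ, F n = F (n % d) := by
    intro d hd0 hd n
    conv_lhs => rw [← Nat.div_add_mod n d]
    exact per d hd (n / d) (n % d)
  have hA : ∀ d : ℕ, 0 < d → F d = y → 4 ≤ d := by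
    intro d hd0 hd
    have hsub : O ⊆ ((Finset.range d).image F : Finset V) := by
      intro b hb
      rw [hy] at hb
      obtain ⟨n, rfl⟩ := hb
      simp only [Finset.coe_image, Finset.coe_range, Set.mem_image, Set.mem_Iio]
      exact ⟨n % d, Nat.mod_lt n hd0, (hmodd d hd0 hd n).symm⟩
    calc (4 : ℕ) = O.ncard := hO4.symm
      _ ≤ (((Finset.range d).image F : Finset V) : Set V).ncard :=
          Set.ncard_le_ncard hsub (Set.toFinite _)
      _ = ((Finset.range d).image F).card := Set.ncard_coe_finset _
      _ ≤ (Finset.range d).card := Finset.card_image_le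
      _ = d := Finset.card_range d
  -- pigeonhole to get period 4
  have hOfin : O.Finite := Set.toFinite O
  have hmemO : ∀ n : ℕ, F n ∈ O := by
    intro n; rw [hy]; exact ⟨n, rfl⟩
  have h5 : ∃ a ∈ Finset.range 5, ∃ b ∈ Finset.range 5, a ≠ b ∧ F a = F b := by
    apply Finset.exists_ne_map_eq_of_card_lt_of_maps_to (t := hOfin.toFinset)
    · rw [Finset.card_range, ← Set.ncard_eq_toFinset_card O hOfin, hO4]
      norm_num
    · intro a _
      rw [Finset.mem_coe, Set.Finite.mem_toFinset]
      exact hmemO a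
  have hper : ∀ a b : ℕ, a < b → F a = F b → F (b - a) = y := by
    intro a b hab he
    have e1 : F b = (φ ^ a) (F (b - a)) := by
      rw [← key a (b - a)]
      congr 1
      omega
    have e2 : F a = (φ ^ a) (F 0) := by simpa using key a 0
    have : (φ ^ a) (F (b - a)) = (φ ^ a) (F 0) := by rw [← e1, ← e2, he]
    have := (φ ^ a).injective this
    simpa [hF] using this
  have h4 : F 4 = y := by
    obtain ⟨a, ha, b, hb, hne, heq⟩ := h5
    simp only [Finset.mem_range] at ha hb
    rcases lt_or_gt_of_ne hne with hlt | hlt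
    · have hp := hper a b hlt heq
      have h4le := hA (b - a) (by omega) hp
      have : b - a = 4 := by omega
      rwa [this] at hp
    · have hp := hper b a hlt heq.symm
      have h4le := hA (a - b) (by omega) hp
      have : a - b = 4 := by omega
      rwa [this] at hp
  have hmod4 : ∀ n : ℕ, F n = F (n % 4) := hmodd 4 (by norm_num) h4
  -- basic facts
  have hinvh : h⁻¹ = h := inv_eq_of_mul_eq_one_right (hsq h)
  have hOne : ∀ a ∈ O, a ≠ 1 ∧ a ≠ h := by
    intro a ha
    have := (hOsub ha).2
    simp only [Set.mem_insert_iff, Set.mem_singleton_iff] at this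
    push_neg at this
    exact this
  -- pigeonhole: some a in O with a*h in O
  have hstep : ∃ a ∈ O, a * h ∈ O := by
    by_contra hcon
    push_neg at hcon
    have himg : (fun g => g * h) '' O ⊆ ((Set.univ : Set V) \ {1, h}) \ O := by
      rintro _ ⟨a, ha, rfl⟩
      refine ⟨⟨trivial, ?_⟩, hcon a ha⟩
      intro hmem
      simp only [Set.mem_insert_iff, Set.mem_singleton_iff] at hmem
      rcases hmem with h1 | h2
      · have : a = h := by
          have := eq_inv_of_mul_eq_one_left h1
          rwa [hinvh] at this
        exact (hOne a ha).2 this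
      · have : a = 1 := by
          have := mul_eq_right.mp h2
          exact this
        exact (hOne a ha).1 this
    have hc1 : ((fun g => g * h) '' O).ncard = 4 := by
      rw [Set.ncard_image_of_injective O (mul_left_injective h), hO4]
    have hc2 : (((Set.univ : Set V) \ {1, h}) \ O).ncard = 2 := by
      have hu : ((Set.univ : Set V) \ {1, h}).ncard = 6 := by
        rw [Set.ncard_diff (Set.subset_univ ({1, h} : Set V)), Set.ncard_univ, hcard,
          Set.ncard_pair (Ne.symm hh)]
      rw [Set.ncard_diff hOsub (Set.toFinite _), hu, hO4]
    have := Set.ncard_le_ncard himg (Set.toFinite _)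
    omega
  -- O is closed under multiplication by h
  obtain ⟨a, haO, hahO⟩ := hstep
  rw [hy] at haO hahO
  obtain ⟨i, hia⟩ := haO
  obtain ⟨m, hm⟩ := hahO
  have hclosed : ∀ b ∈ O, b * h ∈ O := by
    intro b hb
    rw [hy] at hb ⊢
    obtain ⟨j, rfl⟩ := hb
    have h1 : F (j % 4 + 4 - i % 4 + i) = F j := by
      rw [hmod4 (j % 4 + 4 - i % 4 + i), hmod4 j]
      congr 1
      omega
    have h2 : F j * h = F ((j % 4 + 4 - i % 4) + m) := by
      calc F j * h = F ((j % 4 + 4 - i % 4) + i) * h := by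
            rw [show (j % 4 + 4 - i % 4) + i = j % 4 + 4 - i % 4 + i from rfl, h1]
        _ = (φ ^ (j % 4 + 4 - i % 4)) (F i) * h := by rw [key]
        _ = (φ ^ (j % 4 + 4 - i % 4)) (F i) * (φ ^ (j % 4 + 4 - i % 4)) h := by
            rw [hfixpow]
        _ = (φ ^ (j % 4 + 4 - i % 4)) (F i * h) := by rw [map_mul]
        _ = (φ ^ (j % 4 + 4 - i % 4)) (F m) := by rw [hia, hm]
        _ = F ((j % 4 + 4 - i % 4) + m) := (key _ m).symm
    exact h2 ▸ ⟨(j % 4 + 4 - i % 4) + m, rfl⟩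
  -- cardinality of complement
  have hdisj : Disjoint ({1, h} : Set V) O := by
    rw [Set.disjoint_left]
    intro g hg hgO
    exact (hOsub hgO).2 hg
  have hu6 : (({1, h} : Set V) ∪ O).ncard = 6 := by
    rw [Set.ncard_union_eq hdisj (Set.toFinite _) (Set.toFinite _),
      Set.ncard_pair (Ne.symm hh), hO4]
  have hCcard : ((Set.univ : Set V) \ ({1, h} ∪ O)).ncard = 2 := by
    rw [Set.ncard_diff (Set.subset_univ (({1, h} : Set V) ∪ O)), Set.ncard_univ, hcard, hu6]
  obtain ⟨x, hx⟩ := Set.nonempty_of_ncard_ne_zero (s := (Set.univ : Set V) \ ({1, h} ∪ O))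
    (by rw [hCcard]; norm_num)
  have hxh : x * h ∈ (Set.univ : Set V) \ ({1, h} ∪ O) := by
    rw [Set.mem_diff] at hx ⊢
    refine ⟨trivial, ?_⟩
    intro hmem
    rcases hmem with hm | hm
    · simp only [Set.mem_insert_iff, Set.mem_singleton_iff] at hm
      rcases hm with h1 | h2
      · have : x = h := by
          have := eq_inv_of_mul_eq_one_left h1
          rwa [hinvh] at this
        exact hx.2 (Or.inl (by simp [this]))
      · have : x = 1 := mul_eq_right.mp h2
        exact hx.2 (Or.inl (by simp [this]))
    · have : x ∈ O := by
        have := hclosed _ hm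
        rwa [mul_assoc, hsq h, mul_one] at this
      exact hx.2 (Or.inr this)
  refine ⟨x, ?_⟩
  have hne : x ≠ x * h := by
    intro e
    exact hh (left_eq_mul.mp e)
  have hsub2 : ({x, x * h} : Set V) ⊆ (Set.univ : Set V) \ ({1, h} ∪ O) := by
    rintro g hg
    rcases hg with rfl | hg
    · exact hx
    · simp only [Set.mem_singleton_iff] at hg
      rw [hg]
      exact hxh
  exact (Set.eq_of_subset_of_ncard_le hsub2
    (by rw [hCcard, Set.ncard_pair hne]) (Set.toFinite _)).symm
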